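/- Let a ∈ ℝ, b > 0, c = a/b and c₀ < 0, and let ρ(x,t) = ρ¹(x,t) + ρ²(x,t) + ρ³(x,t) be the explicit solution defined below. Then for all x > 0 and t > 0, ∂_t ρ(x,t) + a ∂_x ρ(x,t) − b ∂_xx ρ(x,t) = 0, and for all t > 0 the no-flux boundary condition a ρ(0,t) − b ∂_x ρ(0,t) = 0 holds. -/

import Mathlib

open MeasureTheory Set Filter Topology

/-- The standard normal cumulative distribution function `Φ`. -/
noncomputable def stdNormalCdf (z : ℝ) : ℝ :=
  ∫ x in Iic z, (Real.sqrt (2 * Real.pi))⁻¹ * Real.exp (-x ^ 2 / 2)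

noncomputable def stdGauss (z : ℝ) : ℝ :=
  (Real.sqrt (2 * Real.pi))⁻¹ * Real.exp (-z ^ 2 / 2)

lemma stdGauss_cont : Continuous stdGauss := by
  unfold stdGauss; continuity

lemma integrable_stdGauss : Integrable stdGauss := by
  have h : Integrable (fun x : ℝ => Real.exp (-(1/2 : ℝ) * x ^ 2)) :=
    integrable_exp_neg_mul_sq (by norm_num)
  have := h.const_mul ((Real.sqrt (2 * Real.pi))⁻¹)
  refine this.congr ?_
  filter_upwards with x
  unfold stdGauss
  ring_nf

lemma hasDerivAt_stdNormalCdf (z : ℝ) : HasDerivAt stdNormalCdf (stdGauss z) z := by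
  have hfun : stdNormalCdf = fun y => stdNormalCdf 0 + ∫ x in (0:ℝ)..y, stdGauss x := by
    funext y
    have := intervalIntegral.integral_Iic_sub_Iic (integrable_stdGauss.integrableOn (s := Iic (0:ℝ)))
      (integrable_stdGauss.integrableOn (s := Iic y))
    unfold stdNormalCdf stdGauss at *
    linarith [this]
  rw [hfun]
  exact ((stdGauss_cont.integral_hasStrictDerivAt 0 z).hasDerivAt).const_add _

lemma hasDerivAt_stdGauss (z : ℝ) : HasDerivAt stdGauss (-z * stdGauss z) z := by
  have h1 : HasDerivAt (fun z : ℝ => -z ^ 2 / 2) (-z) z := by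
    have := ((hasDerivAt_pow 2 z).neg).div_const 2
    simpa using this.congr_deriv (by ring)
  have := (h1.exp).const_mul ((Real.sqrt (2 * Real.pi))⁻¹)
  unfold stdGauss
  refine this.congr_deriv ?_
  ring

noncomputable def Ufun (K α β γ δ b x t : ℝ) : ℝ :=
  K * Real.exp (α * x + β * t) * stdNormalCdf ((γ * x + δ * t) / Real.sqrt (2 * b * t))

noncomputable def UfunX (K α β γ δ b x t : ℝ) : ℝ :=
  α * Ufun K α β γ δ b x t
  + K * (γ / Real.sqrt (2 * b * t)) * Real.exp (α * x + β * t) *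
      stdGauss ((γ * x + δ * t) / Real.sqrt (2 * b * t))

noncomputable def UfunXX (K α β γ δ b x t : ℝ) : ℝ :=
  α * UfunX K α β γ δ b x t
  + K * (γ / Real.sqrt (2 * b * t)) * Real.exp (α * x + β * t) *
      stdGauss ((γ * x + δ * t) / Real.sqrt (2 * b * t)) *
      (α - ((γ * x + δ * t) / Real.sqrt (2 * b * t)) * (γ / Real.sqrt (2 * b * t)))

noncomputable def UfunT (K α β γ δ b x t : ℝ) : ℝ :=
  β * Ufun K α β γ δ b x t
  + K * Real.exp (α * x + β * t) * stdGauss ((γ * x + δ * t) / Real.sqrt (2 * b * t)) *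
      (δ / Real.sqrt (2 * b * t)
        - (γ * x + δ * t) * b / Real.sqrt (2 * b * t) ^ 3)

section derivs

variable {K α β γ δ a b x t : ℝ}

lemma hq_x (hσ : Real.sqrt (2 * b * t) ≠ 0) :
    HasDerivAt (fun x : ℝ => (γ * x + δ * t) / Real.sqrt (2 * b * t))
      (γ / Real.sqrt (2 * b * t)) x := by
  have h := (((hasDerivAt_id x).const_mul γ).add_const (δ * t)).div_const
    (Real.sqrt (2 * b * t))
  simpa using h

lemma hp_x : HasDerivAt (fun x : ℝ => α * x + β * t) α x := by
  simpa using ((hasDerivAt_id x).const_mul α).add_const (β * t)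

lemma hasDerivAt_Ufun_x (hσ : Real.sqrt (2 * b * t) ≠ 0) :
    HasDerivAt (fun x => Ufun K α β γ δ b x t) (UfunX K α β γ δ b x t) x := by
  have hΦ := (hasDerivAt_stdNormalCdf ((γ * x + δ * t) / Real.sqrt (2 * b * t))).comp x
    (hq_x (γ := γ) (δ := δ) hσ)
  have hE := (hp_x (α := α) (β := β) (t := t) (x := x)).exp
  have h := (hE.const_mul K).mul hΦ
  simp only [Function.comp_def] at h
  refine h.congr_deriv ?_
  unfold UfunX Ufun
  ring

lemma hasDerivAt_UfunX_x (hσ : Real.sqrt (2 * b * t) ≠ 0) :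
    HasDerivAt (fun x => UfunX K α β γ δ b x t) (UfunXX K α β γ δ b x t) x := by
  have hq := hq_x (γ := γ) (δ := δ) (b := b) (t := t) (x := x) hσ
  have hG := (hasDerivAt_stdGauss ((γ * x + δ * t) / Real.sqrt (2 * b * t))).comp x hq
  have hE := (hp_x (α := α) (β := β) (t := t) (x := x)).exp
  have h1 := (hasDerivAt_Ufun_x (K := K) (α := α) (β := β) (γ := γ) (δ := δ) (x := x) hσ).const_mul α
  have h2 := (hE.const_mul (K * (γ / Real.sqrt (2 * b * t)))).mul hG
  simp only [Function.comp_def] at h2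
  refine (h1.add h2).congr_deriv ?_
  unfold UfunXX
  ring

lemma hasDerivAt_Ufun_t (hb : 0 < b) (ht : 0 < t) :
    HasDerivAt (fun t => Ufun K α β γ δ b x t) (UfunT K α β γ δ b x t) t := by
  have h2bt : (0:ℝ) < 2 * b * t := by positivity
  have hσpos : (0:ℝ) < Real.sqrt (2 * b * t) := Real.sqrt_pos.mpr h2bt
  have hσ : Real.sqrt (2 * b * t) ≠ 0 := ne_of_gt hσpos
  have hlin : HasDerivAt (fun τ : ℝ => 2 * b * τ) (2 * b) t := by
    simpa using (hasDerivAt_id t).const_mul (2 * b)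
  have hsqrt : HasDerivAt (fun τ : ℝ => Real.sqrt (2 * b * τ))
      (b / Real.sqrt (2 * b * t)) t := by
    have := (Real.hasDerivAt_sqrt (ne_of_gt h2bt)).comp t hlin
    refine this.congr_deriv ?_
    field_simp
  have hinv : HasDerivAt (fun τ : ℝ => (Real.sqrt (2 * b * τ))⁻¹)
      (-(b / Real.sqrt (2 * b * t)) / Real.sqrt (2 * b * t) ^ 2) t := hsqrt.inv hσ
  have hnum : HasDerivAt (fun τ : ℝ => γ * x + δ * τ) δ t := by
    simpa using ((hasDerivAt_id t).const_mul δ).const_add (γ * x)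
  have hq : HasDerivAt (fun τ : ℝ => (γ * x + δ * τ) / Real.sqrt (2 * b * τ))
      (δ / Real.sqrt (2 * b * t)
        - (γ * x + δ * t) * b / Real.sqrt (2 * b * t) ^ 3) t := by
    have := hnum.mul hinv
    simp only [div_eq_mul_inv]
    refine this.congr_deriv ?_
    field_simp
    ring
  have hΦ := (hasDerivAt_stdNormalCdf ((γ * x + δ * t) / Real.sqrt (2 * b * t))).comp t hq
  have hp : HasDerivAt (fun τ : ℝ => α * x + β * τ) β t := by
    simpa using ((hasDerivAt_id t).const_mul β).const_add (α * x)
  have h := ((hp.exp).const_mul K).mul hΦ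
  simp only [Function.comp_def] at h
  refine h.congr_deriv ?_
  unfold UfunT Ufun
  ring

lemma U_pde (hb : 0 < b) (ht : 0 < t) (hγ : γ = 1 ∨ γ = -1) :
    UfunT K α (b * α ^ 2 - a * α) γ (2 * b * α * γ - a * γ) b x t
      + a * UfunX K α (b * α ^ 2 - a * α) γ (2 * b * α * γ - a * γ) b x t
      - b * UfunXX K α (b * α ^ 2 - a * α) γ (2 * b * α * γ - a * γ) b x t = 0 := by
  have h2bt : (0:ℝ) < 2 * b * t := by positivity
  have hσ : Real.sqrt (2 * b * t) ≠ 0 := ne_of_gt (Real.sqrt_pos.mpr h2bt)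
  unfold UfunT UfunXX UfunX Ufun
  rcases hγ with rfl | rfl <;> · field_simp; ring

end derivs
/-- First part `ρ¹` of the explicit solution (with `c = a/b`, `σ = √(2bt)`). -/
noncomputable def explRho1 (a b c₀ : ℝ) (x t : ℝ) : ℝ :=
  -c₀ * Real.exp (c₀ * (c₀ * b * t + x - a * t)) *
    stdNormalCdf ((2 * c₀ * b * t + x - a * t) / Real.sqrt (2 * b * t))

/-- Second part `ρ²` of the explicit solution (with `d = c₀ − a/b`). -/
noncomputable def explRho2 (a b c₀ : ℝ) (x t : ℝ) : ℝ :=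
  -c₀ * Real.exp ((c₀ - a / b) * ((c₀ - a / b) * b * t - x + a * t)) *
    stdNormalCdf ((2 * (c₀ - a / b) * b * t - x + a * t) / Real.sqrt (2 * b * t))

/-- Third part `ρ³` of the explicit solution (with `c = a/b`). -/
noncomputable def explRho3 (a b c₀ : ℝ) (x t : ℝ) : ℝ :=
  -(a / b) * Real.exp ((a / b) * x) *
      stdNormalCdf (-(x + a * t) / Real.sqrt (2 * b * t))
  + (a / b) * Real.exp ((a / b) * x) * Real.exp (c₀ * (c₀ * b * t - x - a * t)) *
      stdNormalCdf ((2 * c₀ * b * t - x - a * t) / Real.sqrt (2 * b * t))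

/-- The explicit solution `ρ = ρ¹ + ρ² + ρ³` of the Smoluchowski equation on the
half-line with exponential initial datum `ρ₀(x) = −c₀ e^{c₀ x}`. -/
noncomputable def explRho (a b c₀ : ℝ) (x t : ℝ) : ℝ :=
  explRho1 a b c₀ x t + explRho2 a b c₀ x t + explRho3 a b c₀ x t

lemma explRho_eq (a b c₀ : ℝ) (hb : b ≠ 0) (x t : ℝ) :
    explRho a b c₀ x t =
      Ufun (-c₀) c₀ (b * c₀ ^ 2 - a * c₀) 1 (2 * b * c₀ * 1 - a * 1) b x t
      + Ufun (-c₀) (a / b - c₀) (b * (a / b - c₀) ^ 2 - a * (a / b - c₀)) (-1)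
          (2 * b * (a / b - c₀) * (-1) - a * (-1)) b x t
      + (Ufun (-(a / b)) (a / b) (b * (a / b) ^ 2 - a * (a / b)) (-1)
          (2 * b * (a / b) * (-1) - a * (-1)) b x t
        + Ufun (a / b) (a / b - c₀) (b * (a / b - c₀) ^ 2 - a * (a / b - c₀)) (-1)
          (2 * b * (a / b - c₀) * (-1) - a * (-1)) b x t) := by
  have A1 : c₀ * (c₀ * b * t + x - a * t) = c₀ * x + (b * c₀ ^ 2 - a * c₀) * t := by ring
  have Q1 : (2 * c₀ * b * t + x - a * t) = 1 * x + (2 * b * c₀ * 1 - a * 1) * t := by ring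
  have A2 : (c₀ - a / b) * ((c₀ - a / b) * b * t - x + a * t)
      = (a / b - c₀) * x + (b * (a / b - c₀) ^ 2 - a * (a / b - c₀)) * t := by
    field_simp; ring
  have Q2 : (2 * (c₀ - a / b) * b * t - x + a * t)
      = (-1) * x + (2 * b * (a / b - c₀) * (-1) - a * (-1)) * t := by
    field_simp; ring
  have B3 : b * (a / b) ^ 2 - a * (a / b) = 0 := by field_simp; ring
  have Q3 : -(x + a * t) = (-1) * x + (2 * b * (a / b) * (-1) - a * (-1)) * t := by
    field_simp; ring
  have A4 : (a / b) * x + c₀ * (c₀ * b * t - x - a * t)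
      = (a / b - c₀) * x + (b * (a / b - c₀) ^ 2 - a * (a / b - c₀)) * t := by
    field_simp; ring
  have Q4 : (2 * c₀ * b * t - x - a * t)
      = (-1) * x + (2 * b * (a / b - c₀) * (-1) - a * (-1)) * t := by
    field_simp; ring
  simp only [explRho, explRho1, explRho2, explRho3, Ufun]
  rw [A1, Q1, A2, Q2, Q3, Q4, B3, mul_assoc (a / b) (Real.exp ((a / b) * x)),
    ← Real.exp_add, A4]
  simp [Real.exp_zero]

lemma derivX_explRho (a b c₀ : ℝ) (hb : 0 < b) (t : ℝ) (ht : 0 < t) :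
    deriv (fun ξ => explRho a b c₀ ξ t) = fun ξ =>
      UfunX (-c₀) c₀ (b * c₀ ^ 2 - a * c₀) 1 (2 * b * c₀ * 1 - a * 1) b ξ t
      + UfunX (-c₀) (a / b - c₀) (b * (a / b - c₀) ^ 2 - a * (a / b - c₀)) (-1) (2 * b * (a / b - c₀) * (-1) - a * (-1)) b ξ t
      + (UfunX (-(a / b)) (a / b) (b * (a / b) ^ 2 - a * (a / b)) (-1) (2 * b * (a / b) * (-1) - a * (-1)) b ξ t
        + UfunX (a / b) (a / b - c₀) (b * (a / b - c₀) ^ 2 - a * (a / b - c₀)) (-1) (2 * b * (a / b - c₀) * (-1) - a * (-1)) b ξ t) := by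
  have h2bt : (0:ℝ) < 2 * b * t := by positivity
  have hσ : Real.sqrt (2 * b * t) ≠ 0 := ne_of_gt (Real.sqrt_pos.mpr h2bt)
  have hfun : (fun ξ => explRho a b c₀ ξ t) = fun ξ =>
      Ufun (-c₀) c₀ (b * c₀ ^ 2 - a * c₀) 1 (2 * b * c₀ * 1 - a * 1) b ξ t
      + Ufun (-c₀) (a / b - c₀) (b * (a / b - c₀) ^ 2 - a * (a / b - c₀)) (-1) (2 * b * (a / b - c₀) * (-1) - a * (-1)) b ξ t
      + (Ufun (-(a / b)) (a / b) (b * (a / b) ^ 2 - a * (a / b)) (-1) (2 * b * (a / b) * (-1) - a * (-1)) b ξ t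
        + Ufun (a / b) (a / b - c₀) (b * (a / b - c₀) ^ 2 - a * (a / b - c₀)) (-1) (2 * b * (a / b - c₀) * (-1) - a * (-1)) b ξ t) := funext fun ξ => explRho_eq a b c₀ (ne_of_gt hb) ξ t
  funext ξ
  rw [hfun]
  exact (((hasDerivAt_Ufun_x hσ).add (hasDerivAt_Ufun_x hσ)).add
    ((hasDerivAt_Ufun_x hσ).add (hasDerivAt_Ufun_x hσ))).deriv

/-- The explicit solution satisfies the drift-diffusion PDE for `x > 0`, `t > 0`
and the no-flux boundary condition at `x = 0` for all `t > 0`. -/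
theorem stmt_10 (a b c₀ : ℝ) (hb : 0 < b) (hc₀ : c₀ < 0) :
    (∀ x > (0:ℝ), ∀ t > (0:ℝ),
      deriv (fun τ => explRho a b c₀ x τ) t
        + a * deriv (fun ξ => explRho a b c₀ ξ t) x
        - b * deriv (deriv (fun ξ => explRho a b c₀ ξ t)) x = 0) ∧
    (∀ t > (0:ℝ),
      a * explRho a b c₀ 0 t - b * deriv (fun ξ => explRho a b c₀ ξ t) 0 = 0) := by
  have hbne : b ≠ 0 := ne_of_gt hb
  constructor
  · intro x hx t ht
    have h2bt : (0:ℝ) < 2 * b * t := by positivity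
    have hσ : Real.sqrt (2 * b * t) ≠ 0 := ne_of_gt (Real.sqrt_pos.mpr h2bt)
    have hfT : (fun τ => explRho a b c₀ x τ) = fun τ =>
        Ufun (-c₀) c₀ (b * c₀ ^ 2 - a * c₀) 1 (2 * b * c₀ * 1 - a * 1) b x τ
      + Ufun (-c₀) (a / b - c₀) (b * (a / b - c₀) ^ 2 - a * (a / b - c₀)) (-1) (2 * b * (a / b - c₀) * (-1) - a * (-1)) b x τ
      + (Ufun (-(a / b)) (a / b) (b * (a / b) ^ 2 - a * (a / b)) (-1) (2 * b * (a / b) * (-1) - a * (-1)) b x τ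
        + Ufun (a / b) (a / b - c₀) (b * (a / b - c₀) ^ 2 - a * (a / b - c₀)) (-1) (2 * b * (a / b - c₀) * (-1) - a * (-1)) b x τ) := funext fun τ => explRho_eq a b c₀ hbne x τ
    have hT : deriv (fun τ => explRho a b c₀ x τ) t =
        UfunT (-c₀) c₀ (b * c₀ ^ 2 - a * c₀) 1 (2 * b * c₀ * 1 - a * 1) b x t
      + UfunT (-c₀) (a / b - c₀) (b * (a / b - c₀) ^ 2 - a * (a / b - c₀)) (-1) (2 * b * (a / b - c₀) * (-1) - a * (-1)) b x t
      + (UfunT (-(a / b)) (a / b) (b * (a / b) ^ 2 - a * (a / b)) (-1) (2 * b * (a / b) * (-1) - a * (-1)) b x t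
        + UfunT (a / b) (a / b - c₀) (b * (a / b - c₀) ^ 2 - a * (a / b - c₀)) (-1) (2 * b * (a / b - c₀) * (-1) - a * (-1)) b x t) := by
      rw [hfT]
      exact (((hasDerivAt_Ufun_t hb ht).add (hasDerivAt_Ufun_t hb ht)).add
        ((hasDerivAt_Ufun_t hb ht).add (hasDerivAt_Ufun_t hb ht))).deriv
    have hXf := derivX_explRho a b c₀ hb t ht
    have hXX : deriv (fun ξ =>
        UfunX (-c₀) c₀ (b * c₀ ^ 2 - a * c₀) 1 (2 * b * c₀ * 1 - a * 1) b ξ t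
      + UfunX (-c₀) (a / b - c₀) (b * (a / b - c₀) ^ 2 - a * (a / b - c₀)) (-1) (2 * b * (a / b - c₀) * (-1) - a * (-1)) b ξ t
      + (UfunX (-(a / b)) (a / b) (b * (a / b) ^ 2 - a * (a / b)) (-1) (2 * b * (a / b) * (-1) - a * (-1)) b ξ t
        + UfunX (a / b) (a / b - c₀) (b * (a / b - c₀) ^ 2 - a * (a / b - c₀)) (-1) (2 * b * (a / b - c₀) * (-1) - a * (-1)) b ξ t)) x =
        UfunXX (-c₀) c₀ (b * c₀ ^ 2 - a * c₀) 1 (2 * b * c₀ * 1 - a * 1) b x t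
      + UfunXX (-c₀) (a / b - c₀) (b * (a / b - c₀) ^ 2 - a * (a / b - c₀)) (-1) (2 * b * (a / b - c₀) * (-1) - a * (-1)) b x t
      + (UfunXX (-(a / b)) (a / b) (b * (a / b) ^ 2 - a * (a / b)) (-1) (2 * b * (a / b) * (-1) - a * (-1)) b x t
        + UfunXX (a / b) (a / b - c₀) (b * (a / b - c₀) ^ 2 - a * (a / b - c₀)) (-1) (2 * b * (a / b - c₀) * (-1) - a * (-1)) b x t) :=
      (((hasDerivAt_UfunX_x hσ).add (hasDerivAt_UfunX_x hσ)).add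
        ((hasDerivAt_UfunX_x hσ).add (hasDerivAt_UfunX_x hσ))).deriv
    rw [hT, hXf, hXX]
    have p1 := U_pde (a := a) (K := -c₀) (α := c₀) (γ := 1) (b := b) (x := x) (t := t)
      hb ht (Or.inl rfl)
    have p2 := U_pde (a := a) (K := -c₀) (α := a / b - c₀) (γ := -1) (b := b) (x := x) (t := t)
      hb ht (Or.inr rfl)
    have p3 := U_pde (a := a) (K := -(a / b)) (α := a / b) (γ := -1) (b := b) (x := x) (t := t)
      hb ht (Or.inr rfl)
    have p4 := U_pde (a := a) (K := a / b) (α := a / b - c₀) (γ := -1) (b := b) (x := x) (t := t)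
      hb ht (Or.inr rfl)
    linarith
  · intro t ht
    have h2bt : (0:ℝ) < 2 * b * t := by positivity
    have hσ : Real.sqrt (2 * b * t) ≠ 0 := ne_of_gt (Real.sqrt_pos.mpr h2bt)
    have hσ2 : Real.sqrt (2 * b * t) ^ 2 = 2 * b * t := Real.sq_sqrt h2bt.le
    have hval := explRho_eq a b c₀ hbne 0 t
    have hXf := derivX_explRho a b c₀ hb t ht
    rw [hval, hXf]
    simp only [Ufun, UfunX, mul_zero, zero_add]
    have e1δ : 2 * b * c₀ * 1 - a * 1 = 2 * b * c₀ - a := by ring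
    have e2β : b * (a / b - c₀) ^ 2 - a * (a / b - c₀) = b * c₀ ^ 2 - a * c₀ := by
      field_simp; ring
    have e2δ : 2 * b * (a / b - c₀) * (-1) - a * (-1) = 2 * b * c₀ - a := by
      field_simp; ring
    have e3β : b * (a / b) ^ 2 - a * (a / b) = 0 := by field_simp; ring
    have e3δ : 2 * b * (a / b) * (-1) - a * (-1) = -a := by field_simp; ring
    rw [e1δ, e2β, e2δ, e3β, e3δ]
    simp only [zero_mul, Real.exp_zero, one_mul, mul_one]
    have key : Real.exp ((b * c₀ ^ 2 - a * c₀) * t) *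
        stdGauss ((2 * b * c₀ - a) * t / Real.sqrt (2 * b * t)) =
        stdGauss (-a * t / Real.sqrt (2 * b * t)) := by
      unfold stdGauss
      rw [mul_left_comm, ← Real.exp_add]
      congr 1
      have hq1 : ((2 * b * c₀ - a) * t / Real.sqrt (2 * b * t)) ^ 2
          = ((2 * b * c₀ - a) * t) ^ 2 / (2 * b * t) := by rw [div_pow, hσ2]
      have hq3 : (-a * t / Real.sqrt (2 * b * t)) ^ 2
          = (-a * t) ^ 2 / (2 * b * t) := by rw [div_pow, hσ2]
      rw [hq1, hq3]
      field_simp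
      ring
    obtain ⟨c, rfl⟩ : ∃ c, a = b * c := ⟨a / b, by field_simp⟩
    rw [show b * c / b = c from by field_simp] at *
    linear_combination (b * c / Real.sqrt (2 * b * t)) * key
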